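/- Let α, γ > 0 and let h(u) = α γ^α u^{-(α+1)} e^{-(γ/u)^α} be the Fréchet(α, γ) density on (0,∞). Then h is faster than polynomial near the origin: for every c > 0, there exists η_c > 0 such that the function u ↦ h(u)/u^c is strictly increasing on (0, η_c). -/

import Mathlib

open MeasureTheory Set

/-- The Fréchet(α, γ) density is faster than polynomial near the origin: for every `c > 0`,
`u ↦ h(u)/u^c` is strictly increasing on some interval `(0, η_c)`. -/
theorem frechet_faster_than_polynomial (α γ : ℝ) (hα : 0 < α) (hγ : 0 < γ) (h : ℝ → ℝ)
    (hdef : ∀ u : ℝ, 0 < u →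
      h u = α * γ ^ α * u ^ (-(α + 1)) * Real.exp (-(γ / u) ^ α)) :
    (∃ ε > 0, ∀ u ∈ Ioo (0:ℝ) ε, 0 < h u) ∧
    ∀ c : ℝ, 0 < c → ∃ η > 0, StrictMonoOn (fun u => h u / u ^ c) (Ioo (0:ℝ) η) := by
  have hγα : 0 < γ ^ α := Real.rpow_pos_of_pos hγ α
  have hK : (0:ℝ) < α * γ ^ α := mul_pos hα hγα
  constructor
  · refine ⟨1, one_pos, fun u hu => ?_⟩
    have hu0 := hu.1
    rw [hdef u hu0]
    positivity
  · intro c hc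
    set η : ℝ := (α * γ ^ α / (α + 1 + c)) ^ α⁻¹ with hη_def
    have hden : (0:ℝ) < α + 1 + c := by linarith
    have hηpos : 0 < η := Real.rpow_pos_of_pos (div_pos hK hden) _
    refine ⟨η, hηpos, ?_⟩
    set F : ℝ → ℝ := fun u =>
      Real.log (α * γ ^ α) - (α + 1 + c) * Real.log u - γ ^ α * u ^ (-α) with hF_def
    -- derivative of F
    have hderiv : ∀ u : ℝ, 0 < u →
        HasDerivAt F (-((α + 1 + c) * u⁻¹) - γ ^ α * (-α * u ^ (-α - 1))) u := by
      intro u hu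
      have h1 : HasDerivAt (fun u : ℝ => Real.log u) u⁻¹ u := Real.hasDerivAt_log hu.ne'
      have h2 : HasDerivAt (fun u : ℝ => u ^ (-α)) (-α * u ^ (-α - 1)) u :=
        Real.hasDerivAt_rpow_const (Or.inl hu.ne')
      exact ((h1.const_mul (α + 1 + c)).const_sub (Real.log (α * γ ^ α))).sub
        (h2.const_mul (γ ^ α))
    -- F is strictly increasing on Ioo 0 η
    have hmono : StrictMonoOn F (Ioo (0:ℝ) η) := by
      apply strictMonoOn_of_deriv_pos (convex_Ioo 0 η)
      · intro u hu
        exact (hderiv u hu.1).continuousAt.continuousWithinAt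
      · intro u hu
        rw [interior_Ioo] at hu
        obtain ⟨hu0, huη⟩ := hu
        rw [(hderiv u hu0).deriv]
        have huα : u ^ α < α * γ ^ α / (α + 1 + c) := by
          calc u ^ α < η ^ α := Real.rpow_lt_rpow hu0.le huη hα
          _ = α * γ ^ α / (α + 1 + c) :=
            Real.rpow_inv_rpow (div_pos hK hden).le hα.ne'
        have key : (α + 1 + c) * u ^ α < α * γ ^ α := by
          rw [lt_div_iff₀ hden] at huα
          linarith [huα]
        have h3 : u ^ (-α - 1) = u ^ (-α) * u⁻¹ := by
          rw [← Real.rpow_neg_one u, ← Real.rpow_add hu0]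
          ring_nf
        have h4 : u ^ (-α) = (u ^ α)⁻¹ := by
          rw [← Real.rpow_neg hu0.le]
        have hupos : 0 < u ^ α := Real.rpow_pos_of_pos hu0 α
        rw [h3, h4]
        have goal' : (α + 1 + c) * u⁻¹ < γ ^ α * (α * ((u ^ α)⁻¹ * u⁻¹)) := by
          rw [show γ ^ α * (α * ((u ^ α)⁻¹ * u⁻¹)) = α * γ ^ α * (u ^ α)⁻¹ * u⁻¹ by ring]
          rw [mul_lt_mul_iff_of_pos_right (inv_pos.mpr hu0), ← div_eq_mul_inv, lt_div_iff₀ hupos]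
          linarith [key]
        linarith [goal']
    -- h u / u ^ c = exp (F u) on positives
    have heq : ∀ u : ℝ, 0 < u → h u / u ^ c = Real.exp (F u) := by
      intro u hu
      rw [hdef u hu, hF_def]
      simp only
      have e1 : Real.exp ((α + 1 + c) * Real.log u) = u ^ (α + 1 + c) := by
        rw [Real.rpow_def_of_pos hu]; ring_nf
      have e2 : (γ / u) ^ α = γ ^ α * u ^ (-α) := by
        rw [Real.div_rpow hγ.le hu.le, Real.rpow_neg hu.le, div_eq_mul_inv]
      have e3 : u ^ (-(α + 1)) = u ^ c / u ^ (α + 1 + c) := by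
        rw [← Real.rpow_sub hu]
        congr 1
        ring
      rw [Real.exp_sub, Real.exp_sub, Real.exp_log hK, e1, Real.exp_neg, e2, e3]
      have hc0 : u ^ c ≠ 0 := (Real.rpow_pos_of_pos hu c).ne'
      have hd0 : u ^ (α + 1 + c) ≠ 0 := (Real.rpow_pos_of_pos hu (α + 1 + c)).ne'
      field_simp
    intro x hx y hy hxy
    simp only
    rw [heq x hx.1, heq y hy.1]
    exact Real.exp_lt_exp.mpr (hmono hx hy hxy)
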